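/- There exist constants C > 0 and G > 0 such that for all integers g > G, all integers n ≥ 0 with n² ≤ g, and all integers i, j with 2 ≤ i ≤ g − 2 and 0 ≤ j ≤ n, one has (n choose j) · (2i + j − 2)! · (2g − 2i + n − j − 2)! / (2g + n − 3)! ≤ C · g^{−3}. -/

import Mathlib

open Finset

/-- If `k ≤ a` and `k ≤ b` then `a! * b! ≤ k! * (a+b-k)!`. -/
lemma fac_mul_fac_le (k b : ℕ) (hb : k ≤ b) :
    ∀ a, k ≤ a → Nat.factorial a * Nat.factorial b ≤
      Nat.factorial k * Nat.factorial (a + b - k) := by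
  intro a ha
  induction a, ha using Nat.le_induction with
  | base =>
      have : k + b - k = b := by omega
      rw [this]
  | succ a ha ih =>
      have h1 : a + 1 + b - k = (a + b - k) + 1 := by omega
      rw [Nat.factorial_succ, h1, Nat.factorial_succ]
      calc (a + 1) * Nat.factorial a * Nat.factorial b
          = (a + 1) * (Nat.factorial a * Nat.factorial b) := by ring
        _ ≤ (a + 1) * (Nat.factorial k * Nat.factorial (a + b - k)) :=
            Nat.mul_le_mul_left _ ih
        _ ≤ (a + b - k + 1) * (Nat.factorial k * Nat.factorial (a + b - k)) := by
            apply Nat.mul_le_mul_right; omega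
        _ = Nat.factorial k * ((a + b - k + 1) * Nat.factorial (a + b - k)) := by ring

/-- `q! * (q+1)^t ≤ (q+t)!`. -/
lemma fac_mul_pow_le (q : ℕ) : ∀ t : ℕ, Nat.factorial q * (q + 1) ^ t ≤ Nat.factorial (q + t) := by
  intro t
  induction t with
  | zero => simp
  | succ t ih =>
      have h1 : q + (t + 1) = (q + t) + 1 := by omega
      rw [h1, Nat.factorial_succ, pow_succ]
      calc Nat.factorial q * ((q + 1) ^ t * (q + 1))
          = (Nat.factorial q * (q + 1) ^ t) * (q + 1) := by ring
        _ ≤ Nat.factorial (q + t) * (q + 1) := Nat.mul_le_mul_right _ ih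
        _ ≤ Nat.factorial (q + t) * (q + t + 1) := by
            apply Nat.mul_le_mul_left; omega
        _ = (q + t + 1) * Nat.factorial (q + t) := by ring

/-- `(m+1)*(m+2) ≤ 2 * 3^m`. -/
lemma sq_le_two_pow (m : ℕ) : (m + 1) * (m + 2) ≤ 2 * 3 ^ m := by
  induction m with
  | zero => norm_num
  | succ m ih =>
      have h3 : (0:ℕ) < 3 ^ m := Nat.pow_pos (by norm_num)
      calc (m + 1 + 1) * (m + 1 + 2) ≤ 3 * ((m + 1) * (m + 2)) := by nlinarith
        _ ≤ 3 * (2 * 3 ^ m) := Nat.mul_le_mul_left _ ih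
        _ = 2 * 3 ^ (m + 1) := by ring

/-- The key natural-number inequality. -/
lemma key_nat (g n i j : ℕ) (hg : 100 < g) (hn : n ^ 2 ≤ g)
    (hi2 : 2 ≤ i) (hig : i ≤ g - 2) (hj : j ≤ n) :
    n.choose j * Nat.factorial (2 * i + j - 2) * Nat.factorial (2 * g - 2 * i + n - j - 2)
      * g ^ 3 ≤ 2 * Nat.factorial (2 * g + n - 3) := by
  set m := min j (n - j) with hm
  set a := 2 * i + j - 2 with hadef
  set b := 2 * g - 2 * i + n - j - 2 with hbdef
  have hmn : m ≤ n := by omega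
  have hng : n ≤ g := by nlinarith
  have h3n : 3 * n ≤ g := by nlinarith
  have hka : m + 2 ≤ a := by omega
  have hkb : m + 2 ≤ b := by omega
  have hab : a + b = 2 * g + n - 4 := by omega
  have hN : 2 * g + n - 3 = (a + b - (m + 2)) + (m + 2 + 1) := by omega
  -- Step 1: a! * b! ≤ (m+2)! * (a+b-(m+2))!
  have h1 : Nat.factorial a * Nat.factorial b ≤
      Nat.factorial (m + 2) * Nat.factorial (a + b - (m + 2)) :=
    fac_mul_fac_le (m + 2) b hkb a hka
  -- Step 2: choose n j = choose n m
  have h2 : n.choose j = n.choose m := by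
    rcases le_or_gt j (n - j) with h | h
    · have : m = j := by omega
      rw [this]
    · have hmj : m = n - j := by omega
      rw [hmj, Nat.choose_symm hj]
  -- Step 3: choose n m * (m+2)! ≤ 2 * (3*n)^m
  have h3 : n.choose m * Nat.factorial (m + 2) ≤ 2 * (3 * n) ^ m := by
    have e1 : Nat.factorial (m + 2) = (m + 1) * (m + 2) * Nat.factorial m := by
      rw [Nat.factorial_succ, Nat.factorial_succ]; ring
    have e2 : n.choose m * Nat.factorial m ≤ n ^ m := by
      calc n.choose m * Nat.factorial m = Nat.factorial m * n.choose m := by ring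
        _ = n.descFactorial m := (Nat.descFactorial_eq_factorial_mul_choose n m).symm
        _ ≤ n ^ m := Nat.descFactorial_le_pow n m
    calc n.choose m * Nat.factorial (m + 2)
        = (n.choose m * Nat.factorial m) * ((m + 1) * (m + 2)) := by rw [e1]; ring
      _ ≤ n ^ m * (2 * 3 ^ m) := Nat.mul_le_mul e2 (sq_le_two_pow m)
      _ = 2 * (3 * n) ^ m := by rw [mul_pow]; ring
  -- Step 4: (3n)^m ≤ g^m
  have h4 : (3 * n) ^ m ≤ g ^ m := Nat.pow_le_pow_left h3n m
  -- Step 5: g^(m+3) ≤ (a+b-(m+2)+1)^(m+3)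
  have hq : g ≤ a + b - (m + 2) + 1 := by omega
  have h5 : Nat.factorial (a + b - (m + 2)) * g ^ (m + 3) ≤
      Nat.factorial (2 * g + n - 3) := by
    calc Nat.factorial (a + b - (m + 2)) * g ^ (m + 3)
        ≤ Nat.factorial (a + b - (m + 2)) * (a + b - (m + 2) + 1) ^ (m + 3) :=
          Nat.mul_le_mul_left _ (Nat.pow_le_pow_left hq _)
      _ ≤ Nat.factorial (a + b - (m + 2) + (m + 3)) := fac_mul_pow_le _ _
      _ = Nat.factorial (2 * g + n - 3) := by rw [hN]
  -- Assemble
  calc n.choose j * Nat.factorial a * Nat.factorial b * g ^ 3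
      = n.choose m * (Nat.factorial a * Nat.factorial b) * g ^ 3 := by rw [h2]; ring
    _ ≤ n.choose m * (Nat.factorial (m + 2) * Nat.factorial (a + b - (m + 2))) * g ^ 3 :=
        Nat.mul_le_mul_right _ (Nat.mul_le_mul_left _ h1)
    _ = (n.choose m * Nat.factorial (m + 2)) * (Nat.factorial (a + b - (m + 2)) * g ^ 3) := by
        ring
    _ ≤ (2 * (3 * n) ^ m) * (Nat.factorial (a + b - (m + 2)) * g ^ 3) :=
        Nat.mul_le_mul_right _ h3
    _ ≤ (2 * g ^ m) * (Nat.factorial (a + b - (m + 2)) * g ^ 3) :=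
        Nat.mul_le_mul_right _ (Nat.mul_le_mul_left _ h4)
    _ = 2 * (Nat.factorial (a + b - (m + 2)) * g ^ (m + 3)) := by
        rw [pow_add]; ring
    _ ≤ 2 * Nat.factorial (2 * g + n - 3) := Nat.mul_le_mul_left _ h5

/-- There are `C > 0` and `G > 0` such that for all integers `g > G`, `n ≥ 0` with
`n² ≤ g`, and all `i, j` with `2 ≤ i ≤ g - 2` and `0 ≤ j ≤ n`:
`(n choose j) (2i+j-2)! (2g-2i+n-j-2)! / (2g+n-3)! ≤ C g⁻³`. -/
theorem middle_term_bound :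
    ∃ C > (0 : ℝ), ∃ G : ℕ, 0 < G ∧ ∀ g n i j : ℕ, G < g → n ^ 2 ≤ g →
      2 ≤ i → i ≤ g - 2 → j ≤ n →
      ((n.choose j : ℝ) * (Nat.factorial (2 * i + j - 2) : ℝ) *
            (Nat.factorial (2 * g - 2 * i + n - j - 2) : ℝ)) /
          (Nat.factorial (2 * g + n - 3) : ℝ) ≤
        C / (g : ℝ) ^ 3 := by
  refine ⟨2, by norm_num, 100, by norm_num, fun g n i j hg hn hi2 hig hj => ?_⟩
  have hgpos : (0 : ℝ) < (g : ℝ) ^ 3 := by positivity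
  have hfpos : (0 : ℝ) < (Nat.factorial (2 * g + n - 3) : ℝ) := by
    exact_mod_cast Nat.factorial_pos _
  rw [div_le_div_iff₀ hfpos hgpos]
  have key := key_nat g n i j hg hn hi2 hig hj
  calc (n.choose j : ℝ) * (Nat.factorial (2 * i + j - 2) : ℝ) *
        (Nat.factorial (2 * g - 2 * i + n - j - 2) : ℝ) * (g : ℝ) ^ 3
      = ((n.choose j * Nat.factorial (2 * i + j - 2) *
          Nat.factorial (2 * g - 2 * i + n - j - 2) * g ^ 3 : ℕ) : ℝ) := by push_cast; ring
    _ ≤ ((2 * Nat.factorial (2 * g + n - 3) : ℕ) : ℝ) := by exact_mod_cast key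
    _ = 2 * (Nat.factorial (2 * g + n - 3) : ℝ) := by push_cast; ring
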